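/- For every integer r ≥ 1 one has the identity of formal power series in u over ℤ[q]: q^r·P_{2r+1}(q,u) = qu²·P_{2r-2}(q,qu) + q^r·u·P_{2r+1}(q,qu). -/

import Mathlib

open scoped PowerSeries

/-- The polynomials `p_{s,r}(q) ∈ ℤ[q]` (the graded multiplicities
`[D(2,sω) : D(3,rω)]_q`): `p_{0,0} = p_{1,1} = p_{2,2} = 1`; `p_{s,r} = 0` whenever
`r > s`, or `s - r` is odd, or `s ≤ 2` and `(s,r) ∉ {(0,0),(1,1),(2,2)}`; and for
`s ≥ 3` with `r ≤ s` and `s - r` even, writing `s = 2s₁ + s₀` with `s₀ ∈ {0,1}`,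
`p_{s,r} = q^{(s-r)/2} p_{s-3,r-3} + q^{(s₁+s₀-1)(2-s₀)} p_{s-4+2s₀,r}` if `r ≥ 3`, and
`p_{s,r} = q^{(s₁+s₀-1)(2-s₀)} p_{s-4+2s₀,r}` if `0 ≤ r ≤ 2`. -/
noncomputable def pp : ℕ → ℕ → Polynomial ℤ
  | 0, r => if r = 0 then 1 else 0
  | 1, r => if r = 1 then 1 else 0
  | 2, r => if r = 2 then 1 else 0
  | (s + 3), r =>
    if (s + 3) < r ∨ (s + 3) % 2 ≠ r % 2 then 0
    else
      (if 3 ≤ r then Polynomial.X ^ (((s + 3) - r) / 2) * pp s (r - 3) else 0)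
        + Polynomial.X ^ (((s + 3) / 2 + (s + 3) % 2 - 1) * (2 - (s + 3) % 2))
            * pp ((s + 3) + 2 * ((s + 3) % 2) - 4) r
  termination_by s _ => s
  decreasing_by
  · omega
  · omega

/-- The generating series `P_m(q,u)`: for `m` even, `P_m(q,u) = Σ_{s≥0} p_{2s,m} u^s`;
for `m` odd, `P_m(q,u) = Σ_{s≥0} p_{2s+1,m} u^{s+1}`.  A formal power series in `u` with
coefficients in `ℤ[q]`. -/
noncomputable def Pser (m : ℕ) : PowerSeries (Polynomial ℤ) :=
  PowerSeries.mk fun n =>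
    if m % 2 = 0 then pp (2 * n) m else if n = 0 then 0 else pp (2 * n - 1) m

/-- `thetaSubst a c` is the substituted partial theta series `Θ(a, c·u²) ∈ ℤ[q]⟦u⟧`,
i.e. `Σ_{s≥0} a^{s²} c^s u^{2s}`, where `Θ(q,u) = Σ_{s≥0} q^{s²}u^s`. -/
noncomputable def thetaSubst (a c : Polynomial ℤ) : PowerSeries (Polynomial ℤ) :=
  PowerSeries.mk fun n => if n % 2 = 0 then a ^ ((n / 2) ^ 2) * c ^ (n / 2) else 0

lemma pp_eq_zero (s r : ℕ) (h : s < r) : pp s r = 0 := by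
  match s with
  | 0 => simp [pp]; omega
  | 1 => simp [pp]; omega
  | 2 => simp [pp]; omega
  | (s+3) => rw [pp]; rw [if_pos (Or.inl h)]

lemma pp_rec (m r : ℕ) (hr : 1 ≤ r) (h : ¬ 2*m+3 < 2*r+1) :
    pp (2*m+3) (2*r+1)
      = Polynomial.X ^ (m+1-r) * pp (2*m) (2*r-2)
          + Polynomial.X ^ (m+1) * pp (2*m+1) (2*r+1) := by
  have e1 : (2*m+3 - (2*r+1))/2 = m+1-r := by omega
  have hm : (2*m+3) % 2 = 1 := by omega
  have hd : (2*m+3)/2 = m+1 := by omega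
  have e2 : ((2*m+3)/2 + (2*m+3) % 2 - 1) * (2 - (2*m+3) % 2) = m+1 := by
    rw [hm, hd]; omega
  have e3 : 2*m+3 + 2*((2*m+3)%2) - 4 = 2*m+1 := by omega
  have e4 : 2*r+1-3 = 2*r-2 := by omega
  rw [show 2*m+3 = (2*m)+3 from rfl] at e1 e2 e3 ⊢
  rw [pp, if_neg (by omega), if_pos (by omega), e1, e2, e3, e4]


/-- For every integer `r ≥ 1`, in `ℤ[q]⟦u⟧`:
`q^r·P_{2r+1}(q,u) = qu²·P_{2r-2}(q,qu) + q^r·u·P_{2r+1}(q,qu)`, where `P_m(q,cu)` is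
the rescaled series whose `u^s`-coefficient is `c^s` times that of `P_m(q,u)`. -/
theorem stmt14 (r : ℕ) (hr : 1 ≤ r) :
    PowerSeries.C (Polynomial.X : Polynomial ℤ) ^ r * Pser (2 * r + 1)
      = PowerSeries.C (Polynomial.X : Polynomial ℤ) * PowerSeries.X ^ 2
          * PowerSeries.rescale Polynomial.X (Pser (2 * r - 2))
        + PowerSeries.C (Polynomial.X : Polynomial ℤ) ^ r * PowerSeries.X
            * PowerSeries.rescale Polynomial.X (Pser (2 * r + 1)) := by
  have hodd : (2*r+1) % 2 = 1 := by omega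
  have heven : (2*r-2) % 2 = 0 := by omega
  rw [show PowerSeries.C (Polynomial.X : Polynomial ℤ) ^ r
      = PowerSeries.C ((Polynomial.X : Polynomial ℤ) ^ r) from (map_pow _ _ _).symm]
  rw [show PowerSeries.C (Polynomial.X : Polynomial ℤ) * PowerSeries.X ^ 2
        * PowerSeries.rescale Polynomial.X (Pser (2 * r - 2))
      = PowerSeries.X ^ 2 * (PowerSeries.C (Polynomial.X : Polynomial ℤ)
        * PowerSeries.rescale Polynomial.X (Pser (2 * r - 2))) by ring]
  rw [show PowerSeries.C ((Polynomial.X : Polynomial ℤ) ^ r) * PowerSeries.X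
        * PowerSeries.rescale Polynomial.X (Pser (2 * r + 1))
      = PowerSeries.X ^ 1 * (PowerSeries.C ((Polynomial.X : Polynomial ℤ) ^ r)
        * PowerSeries.rescale Polynomial.X (Pser (2 * r + 1))) by ring]
  refine PowerSeries.ext fun n => ?_
  rw [map_add, PowerSeries.coeff_C_mul]
  match n with
  | 0 =>
    have h1 : (PowerSeries.coeff (R := Polynomial ℤ) 0)
        (PowerSeries.X ^ 2 * (PowerSeries.C (Polynomial.X : Polynomial ℤ)
          * PowerSeries.rescale Polynomial.X (Pser (2 * r - 2)))) = 0 := by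
      simp [PowerSeries.coeff_zero_eq_constantCoeff, PowerSeries.constantCoeff_X]
    have h2 : (PowerSeries.coeff (R := Polynomial ℤ) 0)
        (PowerSeries.X ^ 1 * (PowerSeries.C ((Polynomial.X : Polynomial ℤ) ^ r)
          * PowerSeries.rescale Polynomial.X (Pser (2 * r + 1)))) = 0 := by
      simp [PowerSeries.coeff_zero_eq_constantCoeff, PowerSeries.constantCoeff_X]
    rw [h1, h2]
    simp [Pser, hodd]
  | 1 =>
    have h1 : (PowerSeries.coeff (R := Polynomial ℤ) 1)
        (PowerSeries.X ^ 2 * (PowerSeries.C (Polynomial.X : Polynomial ℤ)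
          * PowerSeries.rescale Polynomial.X (Pser (2 * r - 2)))) = 0 := by
      rw [sq, mul_assoc, show (1:ℕ) = 0 + 1 from rfl, PowerSeries.coeff_succ_X_mul]
      simp [PowerSeries.coeff_zero_eq_constantCoeff, PowerSeries.constantCoeff_X]
    have h2 : (PowerSeries.coeff (R := Polynomial ℤ) 1)
        (PowerSeries.X ^ 1 * (PowerSeries.C ((Polynomial.X : Polynomial ℤ) ^ r)
          * PowerSeries.rescale Polynomial.X (Pser (2 * r + 1)))) = 0 := by
      rw [pow_one, show (1:ℕ) = 0 + 1 from rfl, PowerSeries.coeff_succ_X_mul,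
        PowerSeries.coeff_C_mul, PowerSeries.coeff_rescale]
      simp [Pser, hodd]
    rw [h1, h2]
    simp only [Pser, PowerSeries.coeff_mk]
    rw [if_neg (by omega), if_neg (by omega)]
    rw [pp_eq_zero (2*1-1) (2*r+1) (by omega)]
    ring
  | (m+2) =>
    have A : PowerSeries.coeff (R := Polynomial ℤ) (m+1+1) (Pser (2*r+1))
        = pp (2*m+3) (2*r+1) := by
      simp only [Pser, PowerSeries.coeff_mk]
      rw [if_neg (by omega), if_neg (by omega), show 2*(m+1+1)-1 = 2*m+3 by omega]
    have B : PowerSeries.coeff (R := Polynomial ℤ) m (Pser (2*r-2))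
        = pp (2*m) (2*r-2) := by
      simp only [Pser, PowerSeries.coeff_mk]
      rw [if_pos (by omega)]
    have C : PowerSeries.coeff (R := Polynomial ℤ) (m+1) (Pser (2*r+1))
        = pp (2*m+1) (2*r+1) := by
      simp only [Pser, PowerSeries.coeff_mk]
      rw [if_neg (by omega), if_neg (by omega), show 2*(m+1)-1 = 2*m+1 by omega]
    rw [PowerSeries.coeff_X_pow_mul, show m + 2 = (m+1) + 1 from rfl,
      PowerSeries.coeff_X_pow_mul,
      PowerSeries.coeff_C_mul, PowerSeries.coeff_C_mul,
      PowerSeries.coeff_rescale, PowerSeries.coeff_rescale, A, B, C]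
    by_cases h : 2*m+3 < 2*r+1
    · rw [pp_eq_zero (2*m+3) (2*r+1) (by omega),
        pp_eq_zero (2*m) (2*r-2) (by omega),
        pp_eq_zero (2*m+1) (2*r+1) (by omega)]
      ring
    · rw [pp_rec m r hr h]
      rw [mul_add, ← mul_assoc, ← mul_assoc, ← pow_add]
      rw [show r + (m+1-r) = m+1 by omega]
      ring
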